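/- Let k be a field and p a positive integer. For 1 ≤ j ≤ p let M_j := k[X]/(X^j), a finite-dimensional k-vector space equipped with the endomorphism x given by multiplication by X (which satisfies x^p = 0). Then for all 1 ≤ i ≤ p and 1 ≤ j ≤ p, the k-vector space φ_i(M_j, x) has dimension 1 over k if i = j, and dimension 0 if i ≠ j. -/

import Mathlib

open LinearMap Polynomial

/-- The `i`-th component of the semisimplification functor: for a `k`-vector space `V`
with endomorphism `x`, `φ_i(V,x) := (ker x ⊓ range x^(i-1)) ⧸ (ker x ⊓ range x^i)`. -/
abbrev phi {k V : Type*} [Field k] [AddCommGroup V] [Module k V]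
    (x : V →ₗ[k] V) (i : ℕ) :=
  ↥(LinearMap.ker x ⊓ LinearMap.range (x ^ (i - 1))) ⧸
    ((LinearMap.ker x ⊓ LinearMap.range (x ^ i)).comap
      (LinearMap.ker x ⊓ LinearMap.range (x ^ (i - 1))).subtype)

theorem phi_finrank_zero_of_eq {k V : Type*} [Field k] [AddCommGroup V] [Module k V]
    (x : V →ₗ[k] V) (i : ℕ)
    (h : LinearMap.ker x ⊓ LinearMap.range (x ^ i)
        = LinearMap.ker x ⊓ LinearMap.range (x ^ (i - 1))) :
    Module.finrank k (phi x i) = 0 := by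
  have ht : (LinearMap.ker x ⊓ LinearMap.range (x ^ i)).comap
      (LinearMap.ker x ⊓ LinearMap.range (x ^ (i - 1))).subtype = ⊤ := by
    rw [h, Submodule.comap_subtype_self]
  haveI : Subsingleton (phi x i) := Submodule.Quotient.subsingleton_iff.mpr ht
  exact Module.finrank_zero_of_subsingleton

theorem phi_finrank_of_inf_bot {k V : Type*} [Field k] [AddCommGroup V] [Module k V]
    (x : V →ₗ[k] V) (i : ℕ)
    (h : LinearMap.ker x ⊓ LinearMap.range (x ^ i) = ⊥) :
    Module.finrank k (phi x i)
      = Module.finrank k ↥(LinearMap.ker x ⊓ LinearMap.range (x ^ (i - 1))) := by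
  have ht : (LinearMap.ker x ⊓ LinearMap.range (x ^ i)).comap
      (LinearMap.ker x ⊓ LinearMap.range (x ^ (i - 1))).subtype = ⊥ := by
    rw [h, Submodule.comap_bot, Submodule.ker_subtype]
  exact (Submodule.quotEquivOfEqBot _ ht).finrank_eq

set_option maxHeartbeats 1000000 in
/-- for `M_j := k[X]/(X^j)` with `x` multiplication by `X` (which satisfies
`x^p = 0`), for all `1 ≤ i ≤ p`, `1 ≤ j ≤ p`, `dim_k φ_i(M_j,x) = 1` if `i = j` and `0`
otherwise. -/
theorem stmt0 (k : Type*) [Field k] (p : ℕ) (hp : 0 < p)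
    (i j : ℕ) (hi1 : 1 ≤ i) (hip : i ≤ p) (hj1 : 1 ≤ j) (hjp : j ≤ p) :
    (LinearMap.mulLeft k
        (Ideal.Quotient.mk (Ideal.span {(X : Polynomial k) ^ j}) X)) ^ p = 0 ∧
    Module.finrank k
      (phi (LinearMap.mulLeft k
        (Ideal.Quotient.mk (Ideal.span {(X : Polynomial k) ^ j}) X)) i) =
      if i = j then 1 else 0 := by
  set mk := Ideal.Quotient.mk (Ideal.span {(X : Polynomial k) ^ j}) with hmk
  set x := LinearMap.mulLeft k (mk X) with hx
  have hpow : ∀ m : ℕ, x ^ m = LinearMap.mulLeft k (mk (X ^ m)) := by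
    intro m; rw [hx, LinearMap.pow_mulLeft, map_pow]
  have hmk0 : ∀ m : ℕ, j ≤ m → mk (X ^ m) = 0 := fun m hm =>
    Ideal.Quotient.eq_zero_iff_mem.2 (Ideal.mem_span_singleton.2 (pow_dvd_pow X hm))
  have hx0 : ∀ m : ℕ, j ≤ m → x ^ m = 0 := by
    intro m hm; rw [hpow, hmk0 m hm]; exact LinearMap.mulLeft_zero_eq_zero _ _
  have hxp : x ^ p = 0 := hx0 p hjp
  refine ⟨hxp, ?_⟩
  -- kernel of x is the span of mk (X^(j-1))
  have hker : LinearMap.ker x = Submodule.span k {mk (X ^ (j - 1))} := by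
    apply le_antisymm
    · rintro v hv
      obtain ⟨f, rfl⟩ := Ideal.Quotient.mk_surjective v
      have h1 : (X : Polynomial k) ^ j ∣ X * f := by
        have : mk (X * f) = 0 := by
          have := hv
          simp only [LinearMap.mem_ker, hx, LinearMap.mulLeft_apply] at this
          rw [map_mul]; exact this
        exact Ideal.mem_span_singleton.mp (Ideal.Quotient.eq_zero_iff_mem.mp this)
      have h2 : (X : Polynomial k) * X ^ (j - 1) ∣ X * f := by
        have hXX : (X : Polynomial k) * X ^ (j - 1) = X ^ j := by
          rw [← pow_succ', Nat.sub_add_cancel hj1]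
        rwa [hXX]
      obtain ⟨g, hg⟩ := (mul_dvd_mul_iff_left (Polynomial.X_ne_zero (R := k))).mp h2
      have key : mk f = (g.coeff 0) • mk (X ^ (j - 1)) := by
        rw [show (g.coeff 0) • mk (X ^ (j - 1)) = algebraMap k _ (g.coeff 0) * mk (X ^ (j - 1)) from
          Algebra.smul_def (R := k) (A := Polynomial k ⧸ Ideal.span {(X : Polynomial k) ^ j}) _ _, IsScalarTower.algebraMap_apply k (Polynomial k) (Polynomial k ⧸ Ideal.span {(X : Polynomial k) ^ j}),
          Ideal.Quotient.algebraMap_eq, ← map_mul]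
        rw [Ideal.Quotient.mk_eq_mk_iff_sub_mem]
        have : f - algebraMap k (Polynomial k) (g.coeff 0) * X ^ (j - 1)
            = X ^ (j - 1) * (X * g.divX) := by
          rw [hg, Polynomial.algebraMap_eq]
          have hgd := Polynomial.X_mul_divX_add g
          nth_rewrite 1 [← hgd]
          ring
        rw [this, ← mul_assoc, mul_comm ((X : Polynomial k) ^ (j-1)) X,
          ← pow_succ', Nat.sub_add_cancel hj1]
        exact Ideal.mul_mem_right _ _ (Ideal.subset_span rfl)
      rw [key]
      exact Submodule.smul_mem _ _ (Submodule.subset_span rfl)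
    · rw [Submodule.span_le]
      rintro v rfl
      simp only [SetLike.mem_coe, LinearMap.mem_ker, hx, LinearMap.mulLeft_apply]
      rw [← map_mul, ← pow_succ', Nat.sub_add_cancel hj1, hmk0 j le_rfl]
  -- mk (X^(j-1)) is nonzero
  have hne : mk (X ^ (j - 1)) ≠ 0 := by
    intro h0
    have hmem := Ideal.Quotient.eq_zero_iff_mem.mp h0
    have hdvd : (X : Polynomial k) ^ j ∣ X ^ (j - 1) := Ideal.mem_span_singleton.mp hmem
    have := Polynomial.natDegree_le_of_dvd hdvd (pow_ne_zero _ Polynomial.X_ne_zero)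
    simp only [Polynomial.natDegree_X_pow] at this
    omega
  -- ker x ≤ range (x^m) for m ≤ j - 1
  have hkr : ∀ m : ℕ, m ≤ j - 1 → LinearMap.ker x ≤ LinearMap.range (x ^ m) := by
    intro m hm
    rw [hker, Submodule.span_le]
    rintro v rfl
    refine ⟨mk (X ^ (j - 1 - m)), ?_⟩
    rw [hpow, LinearMap.mulLeft_apply, ← map_mul, ← pow_add,
      Nat.add_sub_cancel' hm]
  -- range (x^m) = ⊥ for j ≤ m
  have hr0 : ∀ m : ℕ, j ≤ m → LinearMap.range (x ^ m) = ⊥ := by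
    intro m hm; rw [hx0 m hm, LinearMap.range_zero]
  rcases lt_trichotomy i j with hij | hij | hij
  · rw [if_neg (Nat.ne_of_lt hij)]
    apply phi_finrank_zero_of_eq
    rw [inf_eq_left.mpr (hkr i (by omega)), inf_eq_left.mpr (hkr (i - 1) (by omega))]
  · subst hij
    rw [if_pos rfl]
    rw [phi_finrank_of_inf_bot _ _ (by rw [hr0 i le_rfl, inf_bot_eq]),
      inf_eq_left.mpr (hkr (i - 1) le_rfl), hker]
    exact finrank_span_singleton hne
  · rw [if_neg (Nat.ne_of_gt hij)]
    apply phi_finrank_zero_of_eq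
    rw [hr0 i (by omega), hr0 (i - 1) (by omega)]
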